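/- Fix positive integers k, W, T, U with W ≤ T and reals ε, δ, α ≥ 0, β ∈ [0,1]. If there exists an (ε·W/(2T), δ·W/(2T))-DP algorithm (under item-level neighbors) for fixed-window freq≥k with window W in the bundle setting on datasets with time horizon 2W over universe [U] having (α,β)-utility, then there exists an (ε,δ)-DP algorithm (under item-level neighbors) for fixed-window freq≥k with window W in the bundle setting on datasets with time horizon T over universe [U] having (α,β)-utility. -/

import Mathlib

open Finset

/-- `(ε, δ)`-differential privacy of a randomized algorithm `M`
with respect to the neighboring relation `neighbor`. -/
def IsDP {I O : Type} (neighbor : I → I → Prop) (M : I → PMF O) (ε δ : ℝ) : Prop :=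
  ∀ D D', neighbor D D' → ∀ s : Set O,
    (M D).toOuterMeasure s ≤
      ENNReal.ofReal (Real.exp ε) * (M D').toOuterMeasure s + ENNReal.ofReal δ

/-- `(α, β)`-utility: for every input and every query, with probability at least
`1 - β` the output estimate is within `α` of the true value. -/
def HasUtility {I Q : Type} (M : I → PMF (Q → ℝ)) (val : I → Q → ℝ) (α β : ℝ) : Prop :=
  ∀ D q, ENNReal.ofReal (1 - β) ≤ (M D).toOuterMeasure {o | |o q - val D q| ≤ α}

/-- A dataset with time horizon `T` over universe `[U]`:
`S t u` is the multiplicity of item `u` at (0-indexed) time step `t`. -/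
abbrev Dataset (T U : ℕ) : Type := Fin T → Fin U → ℕ

/-- `S^{[t₁, t₂]}_u` with 1-indexed times: total multiplicity of item `u`
during time steps `t₁, ..., t₂`. -/
def winCount {T U : ℕ} (S : Dataset T U) (t₁ t₂ : ℕ) (u : Fin U) : ℕ :=
  ∑ t : Fin T, if t₁ ≤ (t : ℕ) + 1 ∧ (t : ℕ) + 1 ≤ t₂ then S t u else 0

/-- `freq≥k(S^{[t₁,t₂]})`: the number of items occurring at least `k` times. -/
def freqGe {T U : ℕ} (k : ℕ) (S : Dataset T U) (t₁ t₂ : ℕ) : ℕ :=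
  (Finset.univ.filter fun u : Fin U => k ≤ winCount S t₁ t₂ u).card

/-- `freq=k(S^{[t₁,t₂]})`: the number of items occurring exactly `k` times. -/
def freqEq {T U : ℕ} (k : ℕ) (S : Dataset T U) (t₁ t₂ : ℕ) : ℕ :=
  (Finset.univ.filter fun u : Fin U => winCount S t₁ t₂ u = k).card

/-- Item-level neighbors: the datasets agree on all items except possibly one. -/
def ItemNeighbor {T U : ℕ} (S S' : Dataset T U) : Prop :=
  ∃ u : Fin U, ∀ u' : Fin U, u' ≠ u → ∀ t : Fin T, S t u' = S' t u'

/-- Event-level neighbors: the total (absolute) difference of multiplicities is at most 1. -/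
def EventNeighbor {T U : ℕ} (S S' : Dataset T U) : Prop :=
  (∑ t : Fin T, ∑ u : Fin U, ((S t u : ℤ) - (S' t u : ℤ)).natAbs) ≤ 1

/-- Singleton setting: at most one item arrives at each time step. -/
def IsSingleton {T U : ℕ} (S : Dataset T U) : Prop :=
  ∀ t : Fin T, (∑ u : Fin U, S t u) ≤ 1

/-- Cumulative `freq≥k` queries: the query indexed by `t : Fin T` is
`freq≥k(S^{[1, t+1]})`. -/
def cumVal (k : ℕ) {T U : ℕ} (S : Dataset T U) (t : Fin T) : ℝ :=
  (freqGe k S 1 ((t : ℕ) + 1) : ℝ)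

/-- Time-window `freq≥k` queries: the query indexed by a pair `t₁ ≤ t₂` (0-indexed)
is `freq≥k(S^{[t₁+1, t₂+1]})`. -/
def twVal (k : ℕ) {T U : ℕ} (S : Dataset T U)
    (p : {p : Fin T × Fin T // p.1 ≤ p.2}) : ℝ :=
  (freqGe k S ((p.1.1 : ℕ) + 1) ((p.1.2 : ℕ) + 1) : ℝ)

/-- Time-window `freq=k` queries. -/
def twValEq (k : ℕ) {T U : ℕ} (S : Dataset T U)
    (p : {p : Fin T × Fin T // p.1 ≤ p.2}) : ℝ :=
  (freqEq k S ((p.1.1 : ℕ) + 1) ((p.1.2 : ℕ) + 1) : ℝ)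

/-- Fixed-window `freq≥k` queries with window `W`: the query indexed by
`i : Fin (T - W + 1)` is `freq≥k(S^{[i+1, i+W]})`. -/
def fwVal (k W : ℕ) {T U : ℕ} (S : Dataset T U) (i : Fin (T - W + 1)) : ℝ :=
  (freqGe k S ((i : ℕ) + 1) ((i : ℕ) + W) : ℝ)

/-- Neighboring inputs for range-query-type problems: they differ by adding
or removing a single point. -/
def AddRemoveNeighbor {P : Type} (D D' : Multiset P) : Prop :=
  ∃ x : P, D' = x ::ₘ D ∨ D = x ::ₘ D'

/-- 1d-range queries over a linearly ordered finite domain `Fin M`: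
the query indexed by `y₁ ≤ y₂` counts the points in `[y₁, y₂]`. -/
def range1Val {M : ℕ} (D : Multiset (Fin M))
    (p : {p : Fin M × Fin M // p.1 ≤ p.2}) : ℝ :=
  ((D.filter fun x => p.1.1 ≤ x ∧ x ≤ p.1.2).card : ℝ)

/-- 2d-range queries over the domain `Fin M × Fin M`: the query indexed by a pair
`(y¹, y²)` counts the points `x` with `y¹ ⪯ x ⪯ y²` coordinatewise. -/
def range2Val {M : ℕ} (D : Multiset (Fin M × Fin M))
    (p : (Fin M × Fin M) × (Fin M × Fin M)) : ℝ :=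
  ((D.filter fun x =>
      p.1.1 ≤ x.1 ∧ p.1.2 ≤ x.2 ∧ x.1 ≤ p.2.1 ∧ x.2 ≤ p.2.2).card : ℝ)

/-- Neighboring inputs for the linear query problem: they differ
in a single coordinate. -/
def CoordNeighbor {m : ℕ} (x x' : Fin m → Bool) : Prop :=
  ∃ u : Fin m, ∀ u' : Fin m, u' ≠ u → x u' = x' u'

/-- The `A`-linear queries: the query indexed by `i : Fin d` is `(A x)_i`. -/
def linVal {d m : ℕ} (A : Fin d → Fin m → Bool) (x : Fin m → Bool) (i : Fin d) : ℝ :=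
  ((∑ u : Fin m, if A i u && x u then 1 else 0 : ℕ) : ℝ)

/-- The 1-way marginal queries: the query indexed by `i : Fin d` is the `i`-th
coordinate of the sum of the input vectors. -/
def margVal {d : ℕ} (D : Multiset (Fin d → Bool)) (i : Fin d) : ℝ :=
  (((D.map fun x => if x i then (1 : ℕ) else 0).sum : ℕ) : ℝ)

namespace HorizonRed

open scoped ENNReal

variable {X : Type}

lemma pmf_om_le_one (r : PMF X) (s : Set X) : r.toOuterMeasure s ≤ 1 := by
  classical
  rw [PMF.toOuterMeasure_apply, ← PMF.tsum_coe r]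
  refine ENNReal.tsum_le_tsum fun x => ?_
  rw [Set.indicator_apply]
  split <;> simp

lemma pmf_om_univ (r : PMF X) : r.toOuterMeasure Set.univ = 1 := by
  rw [PMF.toOuterMeasure_apply]
  simp [PMF.tsum_coe]

/-- The core "integral" lemma: an `(e^ε, δ)`-type set bound between two PMFs
transfers to expectations of `[0,1]`-valued functions. -/
lemma dp_tsum (p q : PMF X) (c d : ℝ≥0∞)
    (hDP : ∀ s : Set X, p.toOuterMeasure s ≤ c * q.toOuterMeasure s + d)
    (f : X → ℝ≥0∞) (hf : ∀ x, f x ≤ 1) :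
    ∑' x, p x * f x ≤ c * ∑' x, q x * f x + d := by
  classical
  have key : ∀ n : ℕ, ∑' x, p x * f x
      ≤ (c * ∑' x, q x * f x + d) + (((2 ^ n : ℕ) : ℝ≥0∞))⁻¹ := by
    intro n
    set N : ℕ := 2 ^ n with hNdef
    have hNpos : 0 < N := Nat.pow_pos (by norm_num)
    have hN0 : ((N : ℕ) : ℝ≥0∞) ≠ 0 := by exact_mod_cast hNpos.ne'
    have hNt : ((N : ℕ) : ℝ≥0∞) ≠ ⊤ := ENNReal.natCast_ne_top N
    set P : ℕ → X → Prop := fun i x => ((i : ℝ≥0∞) + 1) ≤ (N : ℝ≥0∞) * f x with hP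
    have hmono : ∀ x, ∀ i j : ℕ, i ≤ j → P j x → P i x := by
      intro x i j hij hj
      refine le_trans ?_ hj
      have : ((i : ℝ≥0∞)) ≤ (j : ℝ≥0∞) := by exact_mod_cast hij
      exact add_le_add_left this 1
    set cnt : X → ℕ := fun x => ((Finset.range N).filter (fun i => P i x)).card with hcnt
    have hcnt_le : ∀ x, (cnt x : ℝ≥0∞) ≤ (N : ℝ≥0∞) * f x := by
      intro x
      rcases Nat.eq_zero_or_pos (cnt x) with h0 | h0
      · simp [h0]
      · have hne : ((Finset.range N).filter (fun i => P i x)).Nonempty :=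
          Finset.card_pos.mp h0
        have hPM : P (((Finset.range N).filter (fun i => P i x)).max' hne) x :=
          (Finset.mem_filter.mp (Finset.max'_mem _ hne)).2
        have hsub : ((Finset.range N).filter (fun i => P i x))
            ⊆ Finset.range (((Finset.range N).filter (fun i => P i x)).max' hne + 1) := by
          intro i hi
          exact Finset.mem_range.mpr (Nat.lt_succ_of_le (Finset.le_max' _ i hi))
        have hcard : cnt x ≤ ((Finset.range N).filter (fun i => P i x)).max' hne + 1 := by
          simpa using Finset.card_le_card hsub
        have hPc : P (cnt x - 1) x := hmono x _ _ (by omega) hPM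
        have hcast : (cnt x : ℝ≥0∞) = ((cnt x - 1 : ℕ) : ℝ≥0∞) + 1 := by
          have : cnt x = (cnt x - 1) + 1 := by omega
          rw [this]
          push_cast
          ring
        rw [hcast]
        exact hPc
    have hf_le : ∀ x, (N : ℝ≥0∞) * f x ≤ (cnt x : ℝ≥0∞) + 1 := by
      intro x
      rcases lt_or_ge (cnt x) N with hlt | hge
      · have hnot : ¬ P (cnt x) x := by
          intro hPc
          have hsub : Finset.range (cnt x + 1) ⊆ (Finset.range N).filter (fun i => P i x) := by
            intro i hi
            have hi' := Finset.mem_range.mp hi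
            exact Finset.mem_filter.mpr ⟨Finset.mem_range.mpr (by omega),
              hmono x i (cnt x) (by omega) hPc⟩
          have hcard := Finset.card_le_card hsub
          rw [Finset.card_range] at hcard
          have hcard2 : cnt x + 1 ≤ cnt x := hcard
          omega
        exact (not_le.mp hnot).le
      · calc (N : ℝ≥0∞) * f x ≤ (N : ℝ≥0∞) * 1 := mul_le_mul_right (hf x) _
          _ = (N : ℝ≥0∞) := mul_one _
          _ ≤ (cnt x : ℝ≥0∞) + 1 := by
              have : (N : ℝ≥0∞) ≤ (cnt x : ℝ≥0∞) := by exact_mod_cast hge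
              exact this.trans le_self_add
    have hsum : ∀ r : PMF X, ∑' x, r x * (((N : ℕ) : ℝ≥0∞)⁻¹ * (cnt x : ℝ≥0∞))
        = ((N : ℕ) : ℝ≥0∞)⁻¹ * ∑ i ∈ Finset.range N, r.toOuterMeasure {x | P i x} := by
      intro r
      have hc : ∀ x, (cnt x : ℝ≥0∞)
          = ∑ i ∈ Finset.range N, (if P i x then (1 : ℝ≥0∞) else 0) := by
        intro x
        rw [hcnt]
        simp only [Finset.card_filter]
        push_cast [apply_ite (Nat.cast : ℕ → ℝ≥0∞)]
        rfl
      have step : ∀ x, r x * (((N : ℕ) : ℝ≥0∞)⁻¹ * (cnt x : ℝ≥0∞))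
          = ((N : ℕ) : ℝ≥0∞)⁻¹ * ∑ i ∈ Finset.range N, (if P i x then r x else 0) := by
        intro x
        rw [hc x, mul_left_comm, Finset.mul_sum]
        congr 1
        refine Finset.sum_congr rfl fun i _ => ?_
        split <;> simp
      calc ∑' x, r x * (((N : ℕ) : ℝ≥0∞)⁻¹ * (cnt x : ℝ≥0∞))
          = ∑' x, ((N : ℕ) : ℝ≥0∞)⁻¹ * ∑ i ∈ Finset.range N, (if P i x then r x else 0) :=
            tsum_congr step
        _ = ((N : ℕ) : ℝ≥0∞)⁻¹ * ∑' x, ∑ i ∈ Finset.range N, (if P i x then r x else 0) :=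
            ENNReal.tsum_mul_left
        _ = ((N : ℕ) : ℝ≥0∞)⁻¹ * ∑ i ∈ Finset.range N, ∑' x, (if P i x then r x else 0) := by
            rw [Summable.tsum_finsetSum (fun i _ => ENNReal.summable)]
        _ = ((N : ℕ) : ℝ≥0∞)⁻¹ * ∑ i ∈ Finset.range N, r.toOuterMeasure {x | P i x} := by
            congr 1
            refine Finset.sum_congr rfl fun i _ => ?_
            rw [PMF.toOuterMeasure_apply]
            exact tsum_congr fun x => by
              rw [Set.indicator_apply]
              simp only [Set.mem_setOf_eq]
        _ = _ := rfl
    have hNinvN : ((N : ℕ) : ℝ≥0∞)⁻¹ * ((N : ℕ) : ℝ≥0∞) = 1 :=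
      ENNReal.inv_mul_cancel hN0 hNt
    calc ∑' x, p x * f x
        ≤ ∑' x, p x * ((((N : ℕ) : ℝ≥0∞)⁻¹ * (cnt x : ℝ≥0∞)) + ((N : ℕ) : ℝ≥0∞)⁻¹) := by
          refine ENNReal.tsum_le_tsum fun x => mul_le_mul_right ?_ _
          have : f x = ((N : ℕ) : ℝ≥0∞)⁻¹ * ((N : ℝ≥0∞) * f x) := by
            rw [← mul_assoc, hNinvN, one_mul]
          rw [this]
          calc ((N : ℕ) : ℝ≥0∞)⁻¹ * ((N : ℝ≥0∞) * f x)
              ≤ ((N : ℕ) : ℝ≥0∞)⁻¹ * ((cnt x : ℝ≥0∞) + 1) := mul_le_mul_right (hf_le x) _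
            _ = ((N : ℕ) : ℝ≥0∞)⁻¹ * (cnt x : ℝ≥0∞) + ((N : ℕ) : ℝ≥0∞)⁻¹ := by
                rw [mul_add, mul_one]
      _ = (∑' x, p x * (((N : ℕ) : ℝ≥0∞)⁻¹ * (cnt x : ℝ≥0∞))) + ((N : ℕ) : ℝ≥0∞)⁻¹ := by
          simp only [mul_add]
          rw [ENNReal.tsum_add, ENNReal.tsum_mul_right, PMF.tsum_coe, one_mul]
      _ = ((N : ℕ) : ℝ≥0∞)⁻¹ * (∑ i ∈ Finset.range N, p.toOuterMeasure {x | P i x})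
            + ((N : ℕ) : ℝ≥0∞)⁻¹ := by rw [hsum p]
      _ ≤ ((N : ℕ) : ℝ≥0∞)⁻¹ *
            (∑ i ∈ Finset.range N, (c * q.toOuterMeasure {x | P i x} + d))
            + ((N : ℕ) : ℝ≥0∞)⁻¹ := by
          gcongr
          exact hDP _
      _ = c * (((N : ℕ) : ℝ≥0∞)⁻¹ * ∑ i ∈ Finset.range N, q.toOuterMeasure {x | P i x})
            + d + ((N : ℕ) : ℝ≥0∞)⁻¹ := by
          rw [Finset.sum_add_distrib, Finset.sum_const, Finset.card_range,
            nsmul_eq_mul, ← Finset.mul_sum]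
          rw [mul_add, mul_left_comm, ← mul_assoc ((N : ℕ) : ℝ≥0∞)⁻¹, hNinvN, one_mul]
      _ = c * (∑' x, q x * (((N : ℕ) : ℝ≥0∞)⁻¹ * (cnt x : ℝ≥0∞))) + d
            + ((N : ℕ) : ℝ≥0∞)⁻¹ := by rw [hsum q]
      _ ≤ c * (∑' x, q x * f x) + d + ((N : ℕ) : ℝ≥0∞)⁻¹ := by
          gcongr with x
          calc ((N : ℕ) : ℝ≥0∞)⁻¹ * (cnt x : ℝ≥0∞)
              ≤ ((N : ℕ) : ℝ≥0∞)⁻¹ * ((N : ℝ≥0∞) * f x) := mul_le_mul_right (hcnt_le x) _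
            _ = f x := by rw [← mul_assoc, hNinvN, one_mul]
  refine ENNReal.le_of_forall_pos_le_add fun ε hε _ => ?_
  obtain ⟨n, hn⟩ := ENNReal.exists_inv_two_pow_lt
    (show ((ε : ℝ≥0∞)) ≠ 0 from by exact_mod_cast hε.ne')
  refine (key n).trans (add_le_add_right ?_ _)
  have : (((2 ^ n : ℕ) : ℝ≥0∞))⁻¹ = (2 : ℝ≥0∞)⁻¹ ^ n := by
    rw [show ((2 ^ n : ℕ) : ℝ≥0∞) = (2 : ℝ≥0∞) ^ n by push_cast; rfl, ← ENNReal.inv_pow]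
  rw [this]
  exact hn.le

/-- Finite product of PMFs, indexed by `Fin m`. -/
noncomputable def pmfPi : (m : ℕ) → (Fin m → PMF X) → PMF (Fin m → X)
  | 0, _ => PMF.pure finZeroElim
  | (m + 1), p => (p 0).bind fun x => (pmfPi m (fun j => p j.succ)).map (Fin.cons (α := fun _ => X) x)

lemma pmfPi_succ_apply (m : ℕ) (p : Fin (m + 1) → PMF X) (S : Set (Fin (m + 1) → X)) :
    (pmfPi (m + 1) p).toOuterMeasure S
      = ∑' x, p 0 x * (pmfPi m (fun j => p j.succ)).toOuterMeasure (Fin.cons (α := fun _ => X) x ⁻¹' S) := by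
  simp only [pmfPi]
  rw [PMF.toOuterMeasure_bind_apply]
  exact tsum_congr fun x => by rw [PMF.toOuterMeasure_map_apply]

/-- Basic composition of DP bounds for the finite product of PMFs. -/
lemma pmfPi_dp (c d : ℝ≥0∞) : ∀ (m : ℕ) (p q : Fin m → PMF X),
    (∀ j (s : Set X), (p j).toOuterMeasure s ≤ c * (q j).toOuterMeasure s + d) →
    ∀ S : Set (Fin m → X),
      (pmfPi m p).toOuterMeasure S ≤ c ^ m * (pmfPi m q).toOuterMeasure S + (m : ℝ≥0∞) * d := by
  intro m
  induction m with
  | zero =>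
    intro p q h S
    have hpq : pmfPi 0 p = pmfPi 0 q := by simp only [pmfPi]
    rw [hpq]
    simp
  | succ m IH =>
    intro p q h S
    rw [pmfPi_succ_apply, pmfPi_succ_apply]
    set g : X → ℝ≥0∞ :=
      fun x => (pmfPi m (fun j => p j.succ)).toOuterMeasure (Fin.cons (α := fun _ => X) x ⁻¹' S) with hg
    set f : X → ℝ≥0∞ :=
      fun x => (pmfPi m (fun j => q j.succ)).toOuterMeasure (Fin.cons (α := fun _ => X) x ⁻¹' S) with hf
    have hg1 : ∀ x, g x ≤ 1 := fun x => pmf_om_le_one _ _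
    have hstep : ∀ x, g x ≤ min (g x) (c ^ m * f x) + (m : ℝ≥0∞) * d := by
      intro x
      have h1 : g x ≤ c ^ m * f x + (m : ℝ≥0∞) * d :=
        IH (fun j => p j.succ) (fun j => q j.succ) (fun j s => h j.succ s) (Fin.cons (α := fun _ => X) x ⁻¹' S)
      have h2 : g x ≤ min (g x + (m : ℝ≥0∞) * d) (c ^ m * f x + (m : ℝ≥0∞) * d) :=
        le_min le_self_add h1
      rwa [min_add_add_right] at h2
    calc ∑' x, p 0 x * g x
        ≤ ∑' x, p 0 x * (min (g x) (c ^ m * f x) + (m : ℝ≥0∞) * d) :=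
          ENNReal.tsum_le_tsum fun x => mul_le_mul_right (hstep x) _
      _ = (∑' x, p 0 x * min (g x) (c ^ m * f x)) + (m : ℝ≥0∞) * d := by
          simp only [mul_add]
          rw [ENNReal.tsum_add, ENNReal.tsum_mul_right, PMF.tsum_coe, one_mul]
      _ ≤ (c * ∑' x, q 0 x * min (g x) (c ^ m * f x) + d) + (m : ℝ≥0∞) * d := by
          gcongr
          exact dp_tsum (p 0) (q 0) c d (h 0) _
            (fun x => le_trans (min_le_left _ _) (hg1 x))
      _ ≤ (c * (c ^ m * ∑' x, q 0 x * f x) + d) + (m : ℝ≥0∞) * d := by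
          gcongr
          calc ∑' x, q 0 x * min (g x) (c ^ m * f x)
              ≤ ∑' x, q 0 x * (c ^ m * f x) :=
                ENNReal.tsum_le_tsum fun x => mul_le_mul_right (min_le_right _ _) _
            _ = c ^ m * ∑' x, q 0 x * f x := by
                simp_rw [mul_left_comm]
                rw [ENNReal.tsum_mul_left]
      _ = c ^ (m + 1) * ∑' x, q 0 x * f x + ((m + 1 : ℕ) : ℝ≥0∞) * d := by
          push_cast
          ring
    
lemma pmfPi_marginal : ∀ (m : ℕ) (p : Fin m → PMF X) (j : Fin m) (A : Set X),
    (pmfPi m p).toOuterMeasure {o | o j ∈ A} = (p j).toOuterMeasure A := by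
  intro m
  induction m with
  | zero => intro p j A; exact j.elim0
  | succ m IH =>
    intro p j A
    classical
    refine Fin.cases ?_ ?_ j
    · rw [pmfPi_succ_apply]
      have hpre : ∀ x : X, (Fin.cons (α := fun _ => X) x ⁻¹' {o : Fin (m + 1) → X | o 0 ∈ A})
          = if x ∈ A then (Set.univ : Set (Fin m → X)) else ∅ := by
        intro x
        ext v
        by_cases hx : x ∈ A <;> simp [hx, Fin.cons_zero]
      calc ∑' x, p 0 x *
            (pmfPi m (fun j => p j.succ)).toOuterMeasure
              (Fin.cons (α := fun _ => X) x ⁻¹' {o : Fin (m + 1) → X | o 0 ∈ A})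
          = ∑' x, Set.indicator A (p 0) x := by
            refine tsum_congr fun x => ?_
            rw [hpre x, Set.indicator_apply]
            by_cases hx : x ∈ A
            · simp [hx, pmf_om_univ]
            · simp [hx]
        _ = (p 0).toOuterMeasure A := (PMF.toOuterMeasure_apply _ _).symm
    · intro j'
      rw [pmfPi_succ_apply]
      have hpre : ∀ x : X, (Fin.cons (α := fun _ => X) x ⁻¹' {o : Fin (m + 1) → X | o j'.succ ∈ A})
          = {v : Fin m → X | v j' ∈ A} := by
        intro x
        ext v
        simp [Fin.cons_succ]
      calc ∑' x, p 0 x *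
            (pmfPi m (fun j => p j.succ)).toOuterMeasure
              (Fin.cons (α := fun _ => X) x ⁻¹' {o : Fin (m + 1) → X | o j'.succ ∈ A})
          = ∑' x, p 0 x * (p j'.succ).toOuterMeasure A := by
            refine tsum_congr fun x => ?_
            rw [hpre x, IH (fun j => p j.succ) j' A]
        _ = (p j'.succ).toOuterMeasure A := by
            rw [ENNReal.tsum_mul_right, PMF.tsum_coe, one_mul]

/-- Restriction of a horizon-`T` dataset to the `2W`-step segment starting at
time `j*W` (0-indexed), padded with zeros. -/
def seg (W T U : ℕ) (j : ℕ) (D : Dataset T U) : Dataset (2 * W) U :=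
  fun t u => if h : j * W + (t : ℕ) < T then D ⟨j * W + (t : ℕ), h⟩ u else 0

lemma seg_neighbor {W T U : ℕ} {D D' : Dataset T U} (h : ItemNeighbor D D') (j : ℕ) :
    ItemNeighbor (seg W T U j D) (seg W T U j D') := by
  obtain ⟨u, hu⟩ := h
  refine ⟨u, fun u' hu' t => ?_⟩
  unfold seg
  split
  · exact hu u' hu' _
  · rfl

lemma seg_winCount {W T U : ℕ} (hW : 0 < W) (D : Dataset T U) (j r : ℕ)
    (hr : r < W) (hT : j * W + r + W ≤ T) (u : Fin U) :
    winCount (seg W T U j D) (r + 1) (r + W) u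
      = winCount D (j * W + r + 1) (j * W + r + W) u := by
  classical
  set i := j * W + r with hi
  set f : ℕ → ℕ := fun s =>
    if h : s < T then (if i + 1 ≤ s + 1 ∧ s + 1 ≤ i + W then D ⟨s, h⟩ u else 0) else 0
    with hfdef
  have hzero : ∀ s, s ∉ Finset.Ico i (i + W) → f s = 0 := by
    intro s hs
    simp only [Finset.mem_Ico, not_and, not_lt] at hs
    rw [hfdef]
    simp only
    split
    · exact if_neg (by omega)
    · rfl
  have hL : winCount (seg W T U j D) (r + 1) (r + W) u
      = ∑ n ∈ Finset.range (2 * W), f (j * W + n) := by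
    unfold winCount
    have e1 : ∀ t : Fin (2 * W),
        (if r + 1 ≤ (t : ℕ) + 1 ∧ (t : ℕ) + 1 ≤ r + W then seg W T U j D t u else 0)
          = f (j * W + (t : ℕ)) := by
      intro t
      unfold seg
      by_cases hTn : j * W + (t : ℕ) < T
      · rw [hfdef]
        simp only [dif_pos hTn]
        exact if_congr (by omega) rfl rfl
      · rw [hfdef]
        simp only [dif_neg hTn]
        simp
    rw [Finset.sum_congr rfl fun t _ => e1 t]
    exact Fin.sum_univ_eq_sum_range (fun n => f (j * W + n)) (2 * W)
  have hR : winCount D (i + 1) (i + W) u = ∑ s ∈ Finset.range T, f s := by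
    unfold winCount
    have e2 : ∀ t : Fin T,
        (if i + 1 ≤ (t : ℕ) + 1 ∧ (t : ℕ) + 1 ≤ i + W then D t u else 0) = f (t : ℕ) := by
      intro t
      rw [hfdef]
      simp only [dif_pos t.isLt, Fin.eta]
    rw [Finset.sum_congr rfl fun t _ => e2 t]
    exact Fin.sum_univ_eq_sum_range (fun n => f n) T
  have h1 : ∑ n ∈ Finset.range (2 * W), f (j * W + n)
      = ∑ s ∈ Finset.Ico (j * W) (j * W + 2 * W), f s := by
    have h2W : j * W + 2 * W - j * W = 2 * W := by omega
    rw [Finset.sum_Ico_eq_sum_range, h2W]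
  have h2 : ∑ s ∈ Finset.Ico (j * W) (j * W + 2 * W), f s
      = ∑ s ∈ Finset.Ico i (i + W), f s := by
    refine (Finset.sum_subset ?_ fun s _ hs => hzero s hs).symm
    intro s hs
    simp only [Finset.mem_Ico] at *
    omega
  have h3 : ∑ s ∈ Finset.range T, f s = ∑ s ∈ Finset.Ico i (i + W), f s := by
    refine (Finset.sum_subset ?_ fun s _ hs => hzero s hs).symm
    intro s hs
    simp only [Finset.mem_Ico] at hs
    exact Finset.mem_range.mpr (by omega)
  rw [hL, hR, h1, h2, h3]

lemma seg_fwVal (k W T U : ℕ) (hW : 0 < W) (hWT : W ≤ T) (D : Dataset T U)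
    (i : Fin (T - W + 1)) (rfin : Fin (2 * W - W + 1)) (h : (rfin : ℕ) = (i : ℕ) % W) :
    fwVal k W (seg W T U ((i : ℕ) / W) D) rfin = fwVal k W D i := by
  have hiv : (i : ℕ) ≤ T - W := Nat.lt_succ_iff.mp i.isLt
  have hiW : (i : ℕ) + W ≤ T := by omega
  have hdm : ((i : ℕ) / W) * W + (i : ℕ) % W = (i : ℕ) := by
    rw [mul_comm]
    exact Nat.div_add_mod _ W
  have hrW : (i : ℕ) % W < W := Nat.mod_lt _ hW
  have hwc : ∀ u : Fin U,
      winCount (seg W T U ((i : ℕ) / W) D) ((rfin : ℕ) + 1) ((rfin : ℕ) + W) u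
        = winCount D ((i : ℕ) + 1) ((i : ℕ) + W) u := by
    intro u
    rw [h]
    have hseg := seg_winCount hW D ((i : ℕ) / W) ((i : ℕ) % W) hrW (by omega) u
    rw [hseg]
    rw [hdm]
  simp only [fwVal, freqGe, hwc]

end HorizonRed

open HorizonRed

open scoped ENNReal

/-- time-horizon reduction for fixed-window `freq≥k` under
item-level DP in the bundle setting: an `(εW/(2T), δW/(2T))`-DP algorithm for
horizon `2W` yields an `(ε, δ)`-DP algorithm for horizon `T`. -/
theorem fixed_window_horizon_reduction_item (k W T U : ℕ)
    (hk : 0 < k) (hW : 0 < W) (hWT : W ≤ T) (hU : 0 < U)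
    (ε δ α β : ℝ) (hε : 0 ≤ ε) (hδ : 0 ≤ δ) (hα : 0 ≤ α) (hβ0 : 0 ≤ β) (hβ1 : β ≤ 1)
    (h : ∃ M₁ : Dataset (2 * W) U → PMF (Fin (2 * W - W + 1) → ℝ),
      IsDP ItemNeighbor M₁ (ε * (W : ℝ) / (2 * (T : ℝ))) (δ * (W : ℝ) / (2 * (T : ℝ))) ∧
      HasUtility M₁ (fwVal k W) α β) :
    ∃ M₂ : Dataset T U → PMF (Fin (T - W + 1) → ℝ),
      IsDP ItemNeighbor M₂ ε δ ∧ HasUtility M₂ (fwVal k W) α β := by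
  classical
  obtain ⟨M₁, hDP₁, hU₁⟩ := h
  have hT : 0 < T := lt_of_lt_of_le hW hWT
  set m : ℕ := (T - W) / W + 1 with hm
  have hmW : m * W ≤ T := by
    have h1 : (T - W) / W * W ≤ T - W := Nat.div_mul_le_self _ _
    have h2 : m * W = (T - W) / W * W + W := by rw [hm]; ring
    omega
  have hjlt : ∀ i : Fin (T - W + 1), (i : ℕ) / W < m := by
    intro i
    have h1 : (i : ℕ) ≤ T - W := Nat.lt_succ_iff.mp i.isLt
    have h2 : (i : ℕ) / W ≤ (T - W) / W := Nat.div_le_div_right h1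
    omega
  have hrlt : ∀ i : Fin (T - W + 1), (i : ℕ) % W < 2 * W - W + 1 := by
    intro i
    have := Nat.mod_lt (i : ℕ) hW
    omega
  refine ⟨fun D => ((pmfPi m (fun j => M₁ (seg W T U (j : ℕ) D))).map
    (fun F i => F ⟨(i : ℕ) / W, hjlt i⟩ ⟨(i : ℕ) % W, hrlt i⟩)), ?_, ?_⟩
  · -- privacy
    intro D D' hnb s
    rw [PMF.toOuterMeasure_map_apply, PMF.toOuterMeasure_map_apply]
    have hkey := pmfPi_dp (ENNReal.ofReal (Real.exp (ε * (W : ℝ) / (2 * (T : ℝ)))))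
      (ENNReal.ofReal (δ * (W : ℝ) / (2 * (T : ℝ)))) m
      (fun j => M₁ (seg W T U (j : ℕ) D)) (fun j => M₁ (seg W T U (j : ℕ) D'))
      (fun j s => hDP₁ _ _ (seg_neighbor hnb (j : ℕ)) s)
      ((fun (F : Fin m → (Fin (2 * W - W + 1) → ℝ)) (i : Fin (T - W + 1)) =>
        F ⟨(i : ℕ) / W, hjlt i⟩ ⟨(i : ℕ) % W, hrlt i⟩) ⁻¹' s)
    refine hkey.trans (add_le_add (mul_le_mul_left ?_ _) ?_)
    · -- (e^{εW/2T})^m ≤ e^ε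
      have hT' : (0 : ℝ) < (T : ℝ) := by exact_mod_cast hT
      have hmWR : (m : ℝ) * (W : ℝ) ≤ (T : ℝ) := by exact_mod_cast hmW
      rw [← ENNReal.ofReal_pow (Real.exp_nonneg _), ← Real.exp_nat_mul]
      apply ENNReal.ofReal_le_ofReal
      apply Real.exp_le_exp.mpr
      have heq : (m : ℝ) * (ε * (W : ℝ) / (2 * (T : ℝ)))
          = ε * ((m : ℝ) * (W : ℝ)) / (2 * (T : ℝ)) := by ring
      rw [heq, div_le_iff₀ (by positivity)]
      nlinarith [mul_le_mul_of_nonneg_left hmWR hε, mul_nonneg hε hT'.le]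
    · -- m · δW/(2T) ≤ δ
      have hT' : (0 : ℝ) < (T : ℝ) := by exact_mod_cast hT
      have hmWR : (m : ℝ) * (W : ℝ) ≤ (T : ℝ) := by exact_mod_cast hmW
      rw [show ((m : ℝ≥0∞)) = ENNReal.ofReal (m : ℝ) from (ENNReal.ofReal_natCast m).symm,
        ← ENNReal.ofReal_mul (by positivity)]
      apply ENNReal.ofReal_le_ofReal
      have heq : (m : ℝ) * (δ * (W : ℝ) / (2 * (T : ℝ)))
          = δ * ((m : ℝ) * (W : ℝ)) / (2 * (T : ℝ)) := by ring
      rw [heq, div_le_iff₀ (by positivity)]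
      nlinarith [mul_le_mul_of_nonneg_left hmWR hδ, mul_nonneg hδ hT'.le]
  · -- utility
    intro D i
    rw [PMF.toOuterMeasure_map_apply]
    have hpre : ((fun (F : Fin m → (Fin (2 * W - W + 1) → ℝ)) (i : Fin (T - W + 1)) =>
          F ⟨(i : ℕ) / W, hjlt i⟩ ⟨(i : ℕ) % W, hrlt i⟩) ⁻¹'
          {o | |o i - fwVal k W D i| ≤ α})
        = {F : Fin m → (Fin (2 * W - W + 1) → ℝ) | F ⟨(i : ℕ) / W, hjlt i⟩ ∈
            {x : Fin (2 * W - W + 1) → ℝ |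
              |x ⟨(i : ℕ) % W, hrlt i⟩ - fwVal k W D i| ≤ α}} := rfl
    rw [hpre, pmfPi_marginal]
    have hv := seg_fwVal k W T U hW hWT D i ⟨(i : ℕ) % W, hrlt i⟩ rfl
    rw [← hv]
    exact hU₁ (seg W T U ((i : ℕ) / W) D) ⟨(i : ℕ) % W, hrlt i⟩
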